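/- Let V ⊆ ℚⁿ be a ℚ-linear subspace of dimension d. Inside the d-th exterior power ⋀^d ℚⁿ, the intersection of the subspace ⋀^d V (the span of v₁ ∧ ⋯ ∧ v_d with all v_i ∈ V) with the lattice ⋀^d ℤⁿ (the ℤ-span of wedge products of elements of ℤⁿ) equals det(V ∩ ℤⁿ), i.e., the ℤ-submodule generated by the wedge products of d elements of V ∩ ℤⁿ. -/

import Mathlib

noncomputable def stdLattice (n : ℕ) : Submodule ℤ (Fin n → ℚ) :=
  Submodule.span ℤ (Set.range fun i : Fin n => (Pi.single i (1 : ℚ) : Fin n → ℚ))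

open Module Submodule

-- singles are ℤ-independent
lemma single_lin_indep (n : ℕ) :
    LinearIndependent ℤ (fun i : Fin n => (Pi.single i (1 : ℚ) : Fin n → ℚ)) := by
  have hQ : LinearIndependent ℚ (fun i : Fin n => (Pi.single i (1 : ℚ) : Fin n → ℚ)) := by
    have h := (Pi.basisFun ℚ (Fin n)).linearIndependent
    have e : ⇑(Pi.basisFun ℚ (Fin n)) = fun i : Fin n => (Pi.single i (1 : ℚ) : Fin n → ℚ) :=
      funext fun i => Pi.basisFun_apply ℚ (Fin n) i
    rwa [e] at h
  exact hQ.restrict_scalars (smul_left_injective ℤ one_ne_zero)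

noncomputable def stdBasis (n : ℕ) : Basis (Fin n) ℤ ↥(stdLattice n) :=
  Basis.span (single_lin_indep n)

lemma stdBasis_apply (n : ℕ) (i : Fin n) :
    ((stdBasis n i : ↥(stdLattice n)) : Fin n → ℚ) = Pi.single i 1 :=
  congrArg Subtype.val (Basis.span_apply (single_lin_indep n) i)

theorem exteriorPower_subspace_inter_lattice
    (n d : ℕ) (V : Submodule ℚ (Fin n → ℚ)) (hd : Module.finrank ℚ ↥V = d) :
    (Submodule.restrictScalars ℤ
        (Submodule.span ℚ
          {w : ExteriorAlgebra ℚ (Fin n → ℚ) |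
            ∃ v : Fin d → (Fin n → ℚ), (∀ i, v i ∈ V) ∧
              w = ExteriorAlgebra.ιMulti ℚ d v})) ⊓
      Submodule.span ℤ
        {w : ExteriorAlgebra ℚ (Fin n → ℚ) |
          ∃ v : Fin d → (Fin n → ℚ), (∀ i, v i ∈ stdLattice n) ∧
            w = ExteriorAlgebra.ιMulti ℚ d v} =
    Submodule.span ℤ
      {w : ExteriorAlgebra ℚ (Fin n → ℚ) |
        ∃ v : Fin d → (Fin n → ℚ),
          (∀ i, v i ∈ Submodule.restrictScalars ℤ V ⊓ stdLattice n) ∧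
            w = ExteriorAlgebra.ιMulti ℚ d v} := by
  classical
  set L : Submodule ℤ (Fin n → ℚ) := Submodule.restrictScalars ℤ V ⊓ stdLattice n with hLdef
  have hL_le_std : L ≤ stdLattice n := inf_le_right
  have hL_le_V : ∀ x ∈ L, x ∈ V := fun x hx => hx.1
  -- Smith normal form
  obtain ⟨m, ⟨bM, bN, f, a, snf⟩⟩ :=
    Submodule.smithNormalForm (stdBasis n) (L.comap (stdLattice n).subtype)
  set c : Fin n → (Fin n → ℚ) := fun j => ((bM j : ↥(stdLattice n)) : Fin n → ℚ) with hcdef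
  have hcmem : ∀ j, c j ∈ stdLattice n := fun j => (bM j).2
  have hc_ind_Z : LinearIndependent ℤ c := by
    have := bM.linearIndependent
    exact this.map' (stdLattice n).subtype (Submodule.ker_subtype _)
  have hc_ind : LinearIndependent ℚ c := (LinearIndependent.iff_fractionRing ℤ ℚ).mp hc_ind_Z
  -- span of c over ℤ is the lattice
  have hspanZc : Submodule.span ℤ (Set.range c) = stdLattice n := by
    have h1 : Set.range c = (stdLattice n).subtype '' Set.range bM := by
      rw [← Set.range_comp]; rfl
    rw [h1, ← Submodule.map_span, bM.span_eq, Submodule.map_subtype_top]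
  -- c is a ℚ-basis of ℚⁿ
  have hspanQc : ⊤ ≤ Submodule.span ℚ (Set.range c) := by
    rw [← (Pi.basisFun ℚ (Fin n)).span_eq]
    refine Submodule.span_le.mpr ?_
    rintro x ⟨i, rfl⟩
    have : (Pi.basisFun ℚ (Fin n)) i ∈ stdLattice n := by
      rw [Pi.basisFun_apply]; exact Submodule.subset_span ⟨i, rfl⟩
    rw [← hspanZc] at this
    exact Submodule.span_subset_span ℤ ℚ _ this
  set bE : Basis (Fin n) ℚ (Fin n → ℚ) := Basis.mk hc_ind hspanQc with hbEdef
  have hbE : ∀ j, bE j = c j := fun j => Basis.mk_apply _ _ j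
  -- integer coordinates on the lattice
  have hrepr : ∀ x ∈ stdLattice n, ∃ mz : Fin n → ℤ, ∀ j, bE.repr x j = mz j := by
    intro x hx
    rw [← hspanZc, mem_span_range_iff_exists_fun] at hx
    obtain ⟨cc, hcc⟩ := hx
    refine ⟨cc, fun j => ?_⟩
    have hx2 : x = ∑ t, ((cc t : ℚ)) • bE t := by
      rw [← hcc]
      refine Finset.sum_congr rfl fun t _ => ?_
      rw [hbE, Int.cast_smul_eq_zsmul]
    rw [hx2, Basis.repr_sum_self]
  -- the vectors c (f i) lie in L
  have hbN_L : ∀ i, ((bN i : ↥(stdLattice n)) : Fin n → ℚ) ∈ L := fun i => (bN i).2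
  have hsnf : ∀ i, ((bN i : ↥(stdLattice n)) : Fin n → ℚ) = (a i : ℚ) • c (f i) := by
    intro i
    rw [snf i, Submodule.coe_smul, Int.cast_smul_eq_zsmul]
  have ha_ne : ∀ i, a i ≠ 0 := by
    intro i h
    have := hsnf i
    rw [h] at this
    simp only [Int.cast_zero, zero_smul] at this
    exact bN.ne_zero i (Subtype.ext (Subtype.ext (by simpa using this)))
  have hcf_V : ∀ i, c (f i) ∈ V := by
    intro i
    have h1 : ((bN i : ↥(stdLattice n)) : Fin n → ℚ) ∈ V := hL_le_V _ (hbN_L i)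
    rw [hsnf i] at h1
    have := V.smul_mem ((a i : ℚ)⁻¹) h1
    rwa [smul_smul, inv_mul_cancel₀ (by exact_mod_cast ha_ne i), one_smul] at this
  have hcf_L : ∀ i, c (f i) ∈ L := fun i => ⟨hcf_V i, hcmem (f i)⟩
  -- m = d
  have hm_le : m ≤ d := by
    have hind : LinearIndependent ℚ (fun i : Fin m => (⟨c (f i), hcf_V i⟩ : ↥V)) := by
      apply LinearIndependent.of_comp V.subtype
      exact (hc_ind.comp f f.injective)
    have := hind.fintype_card_le_finrank
    simpa [hd] using this
  -- L is the ℤ-span of the images of bN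
  have hbNspan : L ≤ Submodule.span ℤ
      (Set.range (fun i => ((bN i : ↥(stdLattice n)) : Fin n → ℚ))) := by
    intro x hx
    have hx' : x ∈ Submodule.map (stdLattice n).subtype
        (Submodule.comap (stdLattice n).subtype L) := by
      rw [Submodule.map_comap_subtype]
      exact ⟨hL_le_std hx, hx⟩
    obtain ⟨y, hy, rfl⟩ := hx'
    have hy' : (⟨y, hy⟩ : ↥(Submodule.comap (stdLattice n).subtype L)) ∈
        Submodule.span ℤ (Set.range bN) := by rw [bN.span_eq]; trivial
    have := Submodule.apply_mem_span_image_of_mem_span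
      ((stdLattice n).subtype.comp (Submodule.comap (stdLattice n).subtype L).subtype) hy'
    rw [← Set.range_comp] at this
    exact this
  have hV_le_W : V ≤ Submodule.span ℚ (Set.range (c ∘ f)) := by
    have hbN_W : Submodule.span ℤ
        (Set.range (fun i => ((bN i : ↥(stdLattice n)) : Fin n → ℚ))) ≤
        (Submodule.span ℚ (Set.range (c ∘ f))).restrictScalars ℤ := by
      rw [Submodule.span_le]
      rintro w ⟨i, rfl⟩
      have : ((bN i : ↥(stdLattice n)) : Fin n → ℚ) = (a i : ℚ) • c (f i) := hsnf i
      show ((bN i : ↥(stdLattice n)) : Fin n → ℚ) ∈ Submodule.span ℚ (Set.range (c ∘ f))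
      rw [this]
      exact Submodule.smul_mem _ _ (Submodule.subset_span ⟨i, rfl⟩)
    intro v hv
    obtain ⟨b, hb⟩ := IsLocalization.exist_integer_multiples (nonZeroDivisors ℤ)
      Finset.univ v
    choose mz hmz using fun i => hb i (Finset.mem_univ i)
    have hbv_std : ((b : ℤ) • v : Fin n → ℚ) ∈ stdLattice n := by
      rw [stdLattice, mem_span_range_iff_exists_fun]
      refine ⟨mz, ?_⟩
      funext j
      have h1 : (∑ i, mz i • (Pi.single i (1 : ℚ) : Fin n → ℚ)) j
          = ((mz j : ℚ)) := by
        rw [Finset.sum_apply]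
        simp [Pi.single_apply, smul_ite]
      rw [h1]
      have := hmz j
      simpa [Algebra.smul_def] using this
    have hbv_L : ((b : ℤ) • v : Fin n → ℚ) ∈ L := by
      refine ⟨?_, hbv_std⟩
      have : ((b : ℤ) • v : Fin n → ℚ) = ((b : ℤ) : ℚ) • v := by
        rw [Int.cast_smul_eq_zsmul]
      show ((b : ℤ) • v : Fin n → ℚ) ∈ V
      rw [this]
      exact V.smul_mem _ hv
    have hb_ne : ((b : ℤ) : ℚ) ≠ 0 := by
      exact_mod_cast nonZeroDivisors.coe_ne_zero b
    have hbvW : ((b : ℤ) • v : Fin n → ℚ) ∈ Submodule.span ℚ (Set.range (c ∘ f)) :=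
      hbN_W (hbNspan hbv_L)
    have hveq : v = ((b : ℤ) : ℚ)⁻¹ • (((b : ℤ) : ℚ) • v) := by
      rw [smul_smul, inv_mul_cancel₀ hb_ne, one_smul]
    have hcast : (((b : ℤ) : ℚ) • v : Fin n → ℚ) = (b : ℤ) • v :=
      Int.cast_smul_eq_zsmul ℚ _ _
    rw [hveq]
    exact Submodule.smul_mem _ _ (hcast ▸ hbvW)
  have hd_le : d ≤ m := by
    have h1 : finrank ℚ ↥V ≤ finrank ℚ ↥(Submodule.span ℚ (Set.range (c ∘ f))) :=
      Submodule.finrank_mono hV_le_W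
    have h2 : Set.finrank ℚ (Set.range (c ∘ f)) ≤ Fintype.card (Fin m) :=
      finrank_range_le_card (c ∘ f)
    rw [Set.finrank, Fintype.card_fin] at h2
    rw [hd] at h1
    exact h1.trans h2
  obtain rfl : m = d := le_antisymm hm_le hd_le
  -- the distinguished wedge
  set w₀ : ExteriorAlgebra ℚ (Fin n → ℚ) :=
    ExteriorAlgebra.ιMulti ℚ m (fun i => c (f i)) with hw₀def
  -- basis of V
  have hindV : LinearIndependent ℚ (fun i : Fin m => (⟨c (f i), hcf_V i⟩ : ↥V)) := by
    apply LinearIndependent.of_comp V.subtype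
    exact hc_ind.comp f f.injective
  have hspanV : ⊤ ≤ Submodule.span ℚ
      (Set.range (fun i : Fin m => (⟨c (f i), hcf_V i⟩ : ↥V))) := by
    intro x _
    have hx : (x : Fin n → ℚ) ∈ Submodule.span ℚ (Set.range (c ∘ f)) := hV_le_W x.2
    have hx2 : (x : Fin n → ℚ) ∈ Submodule.map V.subtype (Submodule.span ℚ
        (Set.range (fun i : Fin m => (⟨c (f i), hcf_V i⟩ : ↥V)))) := by
      rw [Submodule.map_span, ← Set.range_comp]
      exact hx
    obtain ⟨y, hy, hyx⟩ := hx2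
    rwa [show y = x from Subtype.ext hyx] at hy
  set bV : Basis (Fin m) ℚ ↥V := Basis.mk hindV hspanV with hbVdef
  have hbV : ∀ i, (bV i : Fin n → ℚ) = c (f i) := by
    intro i
    rw [hbVdef, Basis.mk_apply]
  -- the alternating map on V
  set g : AlternatingMap ℚ ↥V (ExteriorAlgebra ℚ (Fin n → ℚ)) (Fin m) :=
    (ExteriorAlgebra.ιMulti ℚ m).compLinearMap V.subtype with hgdef
  have hgb : g (fun i => bV i) = w₀ := by
    rw [hgdef, AlternatingMap.compLinearMap_apply, hw₀def]
    exact congrArg (fun u => ExteriorAlgebra.ιMulti ℚ m u) (funext fun i : Fin m => hbV i)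
  set g₂ : AlternatingMap ℚ ↥V (ExteriorAlgebra ℚ (Fin n → ℚ)) (Fin m) :=
    (LinearMap.toSpanSingleton ℚ (ExteriorAlgebra ℚ (Fin n → ℚ)) w₀).compAlternatingMap
      bV.det with hg₂def
  have hg : g = g₂ := by
    refine Basis.ext_alternating bV (fun vv hvv => ?_)
    set σ : Equiv.Perm (Fin m) := Equiv.ofBijective vv (Finite.injective_iff_bijective.mp hvv)
      with hσdef
    have h1 : (fun i => bV (vv i)) = (fun i => bV i) ∘ σ := rfl
    rw [h1, AlternatingMap.map_perm, AlternatingMap.map_perm, hgb]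
    congr 1
    rw [hg₂def, LinearMap.compAlternatingMap_apply, Basis.det_self,
      LinearMap.toSpanSingleton_apply, one_smul]
  have hVspanW : Submodule.span ℚ
      {w : ExteriorAlgebra ℚ (Fin n → ℚ) |
        ∃ v : Fin m → (Fin n → ℚ), (∀ i, v i ∈ V) ∧
          w = ExteriorAlgebra.ιMulti ℚ m v} ≤ Submodule.span ℚ {w₀} := by
    rw [Submodule.span_le]
    rintro w ⟨v, hv, rfl⟩
    have h1 : ExteriorAlgebra.ιMulti ℚ m v = g (fun i => ⟨v i, hv i⟩) := rfl
    rw [h1, hg, hg₂def, LinearMap.compAlternatingMap_apply,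
      LinearMap.toSpanSingleton_apply]
    exact Submodule.smul_mem _ _ (Submodule.mem_span_singleton_self w₀)
  -- the integrality functional
  set P : (Fin n → ℚ) →ₗ[ℚ] (Fin m → ℚ) := LinearMap.pi (fun i => bE.coord (f i)) with hPdef
  set ψ : AlternatingMap ℚ (Fin n → ℚ) ℚ (Fin m) :=
    (Pi.basisFun ℚ (Fin m)).det.compLinearMap P with hψdef
  have hψ : ∀ v : Fin m → (Fin n → ℚ),
      ψ v = Matrix.det (Matrix.of fun i k => bE.repr (v k) (f i)) := by
    intro v
    rw [hψdef, AlternatingMap.compLinearMap_apply, Basis.det_apply]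
    congr 1
  have hψint : ∀ v : Fin m → (Fin n → ℚ), (∀ i, v i ∈ stdLattice n) →
      ∃ k : ℤ, ψ v = (k : ℚ) := by
    intro v hv
    choose mz hmz using fun k => hrepr (v k) (hv k)
    refine ⟨Matrix.det (Matrix.of fun i k => mz k (f i)), ?_⟩
    rw [hψ]
    have : (Matrix.of fun i k => bE.repr (v k) (f i)) =
        (Int.castRingHom ℚ).mapMatrix (Matrix.of fun i k => mz k (f i)) := by
      ext i k
      simp [RingHom.mapMatrix_apply, Matrix.map_apply, hmz]
    rw [this, ← RingHom.map_det]
    rfl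
  have hψcf : ψ (fun i => c (f i)) = 1 := by
    rw [hψ]
    have : (Matrix.of fun i k => bE.repr ((fun j => c (f j)) k) (f i)) =
        (1 : Matrix (Fin m) (Fin m) ℚ) := by
      funext i k
      show bE.repr (c (f k)) (f i) = (1 : Matrix (Fin m) (Fin m) ℚ) i k
      rw [← hbE, Basis.repr_self]
      simp [Finsupp.single_apply, Matrix.one_apply, f.injective.eq_iff, eq_comm]
    rw [this, Matrix.det_one]
  set φ : ExteriorAlgebra ℚ (Fin n → ℚ) →ₗ[ℚ] ℚ :=
    ExteriorAlgebra.liftAlternating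
      (Function.update (fun i => (0 : AlternatingMap ℚ (Fin n → ℚ) ℚ (Fin i))) m ψ)
    with hφdef
  have hφι : ∀ v : Fin m → (Fin n → ℚ),
      φ (ExteriorAlgebra.ιMulti ℚ m v) = ψ v := by
    intro v
    rw [hφdef, ExteriorAlgebra.liftAlternating_apply_ιMulti, Function.update_self]
  have hφint : ∀ x ∈ Submodule.span ℤ
      {w : ExteriorAlgebra ℚ (Fin n → ℚ) |
        ∃ v : Fin m → (Fin n → ℚ), (∀ i, v i ∈ stdLattice n) ∧
          w = ExteriorAlgebra.ιMulti ℚ m v}, ∃ k : ℤ, φ x = (k : ℚ) := by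
    intro x hx
    induction hx using Submodule.span_induction with
    | mem w hw =>
      obtain ⟨v, hv, rfl⟩ := hw
      rw [hφι]
      exact hψint v hv
    | zero => exact ⟨0, by simp⟩
    | add y z _ _ hy hz =>
      obtain ⟨k1, h1⟩ := hy
      obtain ⟨k2, h2⟩ := hz
      exact ⟨k1 + k2, by rw [map_add, h1, h2]; push_cast; ring⟩
    | smul z y _ hy =>
      obtain ⟨k, h⟩ := hy
      refine ⟨z * k, ?_⟩
      rw [map_zsmul, h, zsmul_eq_mul]
      push_cast
      ring
  -- final assembly
  apply le_antisymm
  · rintro x ⟨hx1, hx2⟩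
    have hx1' : x ∈ Submodule.span ℚ
        {w : ExteriorAlgebra ℚ (Fin n → ℚ) |
          ∃ v : Fin m → (Fin n → ℚ), (∀ i, v i ∈ V) ∧
            w = ExteriorAlgebra.ιMulti ℚ m v} := hx1
    obtain ⟨q, hq⟩ := Submodule.mem_span_singleton.mp (hVspanW hx1')
    obtain ⟨k, hk⟩ := hφint x hx2
    have hφx : φ x = q := by
      rw [← hq, map_smul, hw₀def, hφι, hψcf, smul_eq_mul, mul_one]
    have hqk : q = (k : ℚ) := by rw [← hφx, hk]
    have hxk : x = (k : ℤ) • w₀ := by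
      rw [← hq, hqk, Int.cast_smul_eq_zsmul]
    rw [hxk]
    exact Submodule.smul_mem _ k
      (Submodule.subset_span ⟨fun i => c (f i), fun i => hcf_L i, rfl⟩)
  · rw [Submodule.span_le]
    rintro w ⟨v, hv, rfl⟩
    refine ⟨?_, Submodule.subset_span ⟨v, fun i => (hv i).2, rfl⟩⟩
    show ExteriorAlgebra.ιMulti ℚ m v ∈ Submodule.span ℚ _
    exact Submodule.subset_span ⟨v, fun i => (hv i).1, rfl⟩
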